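/- For the natural action of the monoid algebra ℂ[T_n] on ℂ^n (given by f · v_i = v_{f(i)}), the induced action on the r-th exterior power Λ^r(ℂ^n) makes Λ^r(ℂ^n) a ℂ[T_n]-module, and the element η = (1/r!) Σ_{g ∈ G} sgn(g|_{[r]}) g, where G is the group of units of e_r T_n e_r, is an idempotent of ℂ[T_n] with ℂ[T_n]·η ≅ Λ^r(ℂ^n) as left ℂ[T_n]-modules; in particular Λ^r(ℂ^n) is a projective ℂ[T_n]-module. -/

import Mathlib

open Finset in
/-- The natural representation of the full transformation monoid `Function.End (Fin n)`
on `ℂ^n`, determined by `f · v_i = v_{f i}` on the standard basis. -/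
noncomputable def natRep (n : ℕ) :
    Representation ℂ (Function.End (Fin n)) (Fin n → ℂ) where
  toFun f :=
    { toFun := fun x j => ∑ i, if f i = j then x i else 0
      map_add' := by
        intro x y
        funext j
        simp only [Pi.add_apply]
        rw [← Finset.sum_add_distrib]
        congr 1; funext i; split <;> simp
      map_smul' := by
        intro c x
        funext j
        simp [Finset.mul_sum, apply_ite (fun t => c * t)] }
  map_one' := by
    refine LinearMap.ext fun x => funext fun j => ?_
    show (∑ i, if (1 : Function.End (Fin n)) i = j then x i else 0) = x j
    have h : ∀ i : Fin n, (1 : Function.End (Fin n)) i = i := fun _ => rfl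
    simp only [h]
    rw [Finset.sum_ite_eq' Finset.univ j x]
    simp
  map_mul' := by
    intro f g
    refine LinearMap.ext fun x => funext fun j => ?_
    show (∑ i, if f (g i) = j then x i else 0)
        = ∑ k, if f k = j then ∑ i, if g i = k then x i else 0 else 0
    have key : ∀ k, (if f k = j then ∑ i, if g i = k then x i else 0 else 0)
        = ∑ i, if g i = k then (if f k = j then x i else 0) else 0 := by
      intro k; split
      · rfl
      · simp
    rw [Finset.sum_congr rfl (fun k _ => key k), Finset.sum_comm]
    refine Finset.sum_congr rfl fun i _ => ?_
    rw [Finset.sum_ite_eq Finset.univ (g i) (fun k => if f k = j then x i else 0)]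
    simp

lemma sum_natRep (n : ℕ) (f : Function.End (Fin n)) (x : Fin n → ℂ) :
    ∑ j, natRep n f x j = ∑ i, x i := by
  show ∑ j, ∑ i, (if f i = j then x i else 0) = _
  rw [Finset.sum_comm]
  simp [Finset.sum_ite_eq' Finset.univ]

/-- The augmentation submodule `Aug(ℂ^n)` of the natural module: vectors whose
coordinates sum to zero. -/
noncomputable def Aug (n : ℕ) : Submodule ℂ (Fin n → ℂ) where
  carrier := {x | ∑ i, x i = 0}
  add_mem' := by intro a b ha hb; simp_all [Finset.sum_add_distrib]
  zero_mem' := by simp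
  smul_mem' := by intro c a ha; simp_all [← Finset.mul_sum]

lemma natRep_mem_aug (n : ℕ) (f : Function.End (Fin n)) {x : Fin n → ℂ}
    (hx : x ∈ Aug n) : natRep n f x ∈ Aug n := by
  have : ∑ j, natRep n f x j = 0 := by rw [sum_natRep]; exact hx
  exact this

/-- The representation of the full transformation monoid on the augmentation submodule. -/
noncomputable def augRep (n : ℕ) : Representation ℂ (Function.End (Fin n)) (Aug n) where
  toFun f := (natRep n f).restrict (p := Aug n) (q := Aug n) (fun _ hx => natRep_mem_aug n f hx)
  map_one' := by
    refine LinearMap.ext fun x => Subtype.ext ?_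
    simp [LinearMap.restrict_apply]
  map_mul' := by
    intro f g
    refine LinearMap.ext fun x => Subtype.ext ?_
    simp [LinearMap.restrict_apply]

lemma extAlg_map_mem {R M N : Type} [CommRing R] [AddCommGroup M] [Module R M]
    [AddCommGroup N] [Module R N] (r : ℕ) (f : M →ₗ[R] N) {x : ExteriorAlgebra R M}
    (hx : x ∈ ⋀[R]^r M) : ExteriorAlgebra.map f x ∈ ⋀[R]^r N := by
  rw [← ExteriorAlgebra.ιMulti_span_fixedDegree] at hx ⊢
  induction hx using Submodule.span_induction with
  | mem y hy =>
      obtain ⟨v, rfl⟩ := hy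
      rw [ExteriorAlgebra.map_apply_ιMulti]
      exact Submodule.subset_span ⟨f ∘ v, rfl⟩
  | zero => simp
  | add y z _ _ hy hz => rw [map_add]; exact Submodule.add_mem _ hy hz
  | smul c y _ hy => rw [map_smul]; exact Submodule.smul_mem _ c hy

/-- The linear map between `r`-th exterior powers induced by a linear map. -/
noncomputable def extMap {R M N : Type} [CommRing R] [AddCommGroup M] [Module R M]
    [AddCommGroup N] [Module R N] (r : ℕ) (f : M →ₗ[R] N) :
    ⋀[R]^r M →ₗ[R] ⋀[R]^r N :=
  (ExteriorAlgebra.map f).toLinearMap.restrict (p := ⋀[R]^r M) (q := ⋀[R]^r N)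
    (fun _ hx => extAlg_map_mem r f hx)

/-- The representation of the full transformation monoid on the `r`-th exterior power
of the natural module, by the diagonal action on wedge products. -/
noncomputable def extRep (n r : ℕ) :
    Representation ℂ (Function.End (Fin n)) (⋀[ℂ]^r (Fin n → ℂ)) where
  toFun f := extMap r (natRep n f)
  map_one' := by
    refine LinearMap.ext fun x => Subtype.ext ?_
    simp [extMap, LinearMap.restrict_apply, map_one, Module.End.one_eq_id,
      ExteriorAlgebra.map_id]
  map_mul' := by
    intro f g
    refine LinearMap.ext fun x => Subtype.ext ?_
    simp only [extMap, LinearMap.restrict_apply, map_mul, Module.End.mul_eq_comp,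
      ← ExteriorAlgebra.map_comp_map]
    rfl

set_option synthInstance.maxHeartbeats 1000000 in
/-- The representation of the full transformation monoid on the `r`-th exterior power
of the augmentation submodule. -/
noncomputable def extAugRep (n r : ℕ) :
    Representation ℂ (Function.End (Fin n)) (⋀[ℂ]^r ↥(Aug n)) where
  toFun f := extMap r (augRep n f)
  map_one' := by
    refine LinearMap.ext fun x => Subtype.ext ?_
    simp [extMap, LinearMap.restrict_apply, map_one, Module.End.one_eq_id,
      ExteriorAlgebra.map_id]
  map_mul' := by
    intro f g
    refine LinearMap.ext fun x => Subtype.ext ?_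
    simp only [extMap, LinearMap.restrict_apply, map_mul, Module.End.mul_eq_comp,
      ← ExteriorAlgebra.map_comp_map]
    rfl

/-- The idempotent `e_m ∈ T_n` fixing the first `m` points and sending all other
points to the first point. -/
def eIdem (n m : ℕ) : Function.End (Fin n) :=
  fun i => if h : (i : ℕ) < m then i else ⟨0, i.pos⟩

/-- The embedding of the symmetric group `S_r` into `T_n` as the maximal subgroup
at the idempotent `eIdem n r` (elements `g` with `e g e = g` invertible in `e T_n e`). -/
def permEmbed (n r : ℕ) (hr : 1 ≤ r) (hrn : r ≤ n) (σ : Equiv.Perm (Fin r)) :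
    Function.End (Fin n) :=
  fun i => Fin.castLE hrn (σ (if hi : (i : ℕ) < r then ⟨i, hi⟩ else ⟨0, hr⟩))

/-- The idempotent `η = (1/r!) ∑_{g ∈ G} sgn(g|_{[r]}) g` of the monoid algebra,
where `G ≅ S_r` is the maximal subgroup at `eIdem n r`. -/
noncomputable def eta (n r : ℕ) (hr : 1 ≤ r) (hrn : r ≤ n) :
    MonoidAlgebra ℂ (Function.End (Fin n)) :=
  (r.factorial : ℂ)⁻¹ • ∑ σ : Equiv.Perm (Fin r),
    MonoidAlgebra.single (permEmbed n r hr hrn σ) ((Equiv.Perm.sign σ : ℤ) : ℂ)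

/-- A permutation of `Fin m`, viewed as an element of the transformation monoid. -/
def permToEnd (m : ℕ) : Equiv.Perm (Fin m) →* Function.End (Fin m) where
  toFun σ := ⇑σ
  map_one' := rfl
  map_mul' := fun _ _ => rfl

/-- The wedge product of a family of `r` vectors, as an element of the `r`-th
exterior power. -/
noncomputable def wedge {M : Type} [AddCommGroup M] [Module ℂ M] (r : ℕ) (v : Fin r → M) :
    ⋀[ℂ]^r M :=
  ⟨ExteriorAlgebra.ιMulti ℂ r v, ExteriorAlgebra.ιMulti_range ℂ r ⟨v, rfl⟩⟩

/-- The basis `w_1, …, w_n` of `ℂ^n`: `w_i = v_i - v_n` for `i < n` and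
`w_n = v_1 + ⋯ + v_n`. -/
noncomputable def wBasis (n : ℕ) : Fin n → (Fin n → ℂ) :=
  fun i => if h : (i : ℕ) < n - 1
    then Pi.single i 1 - Pi.single (⟨n - 1, by omega⟩ : Fin n) 1
    else ∑ j, Pi.single j 1

lemma wBasis_mem_aug (n : ℕ) (i : Fin n) (h : (i : ℕ) < n - 1) : wBasis n i ∈ Aug n := by
  show ∑ j, wBasis n i j = 0
  simp [wBasis, h, Finset.sum_sub_distrib, Finset.sum_pi_single]

/-- The vectors `w_i = v_i - v_n` (for `i < n`) as elements of the augmentation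
submodule; junk value `0` otherwise. -/
noncomputable def wAug (n : ℕ) : Fin n → ↥(Aug n) :=
  fun i => if h : (i : ℕ) < n - 1 then ⟨wBasis n i, wBasis_mem_aug n i h⟩ else 0

/-- The trivial representation of the full transformation monoid on `ℂ`. -/
noncomputable def trivRep (n : ℕ) : Representation ℂ (Function.End (Fin n)) ℂ := 1

/-- `projDimLE R M k` : the `R`-module `M` admits a projective resolution of length
at most `k`, i.e. has projective dimension at most `k`. -/
def projDimLE (R : Type) [Ring R] (M : Type) [AddCommMonoid M] [Module R M] (k : ℕ) : Prop :=
  ∃ (P : ℕ → ModuleCat.{0} R) (d : (i : ℕ) → (P (i + 1) →ₗ[R] P i)) (π : P 0 →ₗ[R] M),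
    (∀ i, Module.Projective R (P i)) ∧
    Function.Surjective π ∧
    LinearMap.ker π = LinearMap.range (d 0) ∧
    (∀ i, LinearMap.ker (d i) = LinearMap.range (d (i + 1))) ∧
    (∀ i, k < i → Subsingleton (P i))

/-- The sign character of `S_n`, extended by zero to all of `T_n`. -/
noncomputable def sgnExt (n : ℕ) (f : Function.End (Fin n)) : ℂ :=
  @dite _ (Function.Bijective f) (Fintype.decidableBijectiveFintype f)
    (fun h => ((Equiv.Perm.sign (Equiv.ofBijective f h) : ℤ) : ℂ)) (fun _ => 0)

noncomputable section AuxEta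

open MonoidAlgebra Finset

variable (n r : ℕ) (hr : 1 ≤ r) (hrn : r ≤ n)

/-- Truncation `Fin n → Fin r`. -/
def toR {n : ℕ} (r : ℕ) (hr : 1 ≤ r) (i : Fin n) : Fin r :=
  if h : (i : ℕ) < r then ⟨i, h⟩ else ⟨0, hr⟩

lemma toR_castLE (i : Fin r) : toR r hr (Fin.castLE hrn i) = i := by
  simp only [toR, Fin.coe_castLE, i.isLt, dif_pos]

lemma permEmbed_apply (σ : Equiv.Perm (Fin r)) (i : Fin n) :
    permEmbed n r hr hrn σ i = Fin.castLE hrn (σ (toR r hr i)) := rfl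

lemma permEmbed_castLE (σ : Equiv.Perm (Fin r)) (i : Fin r) :
    permEmbed n r hr hrn σ (Fin.castLE hrn i) = Fin.castLE hrn (σ i) := by
  rw [permEmbed_apply, toR_castLE]

lemma permEmbed_mul (σ τ : Equiv.Perm (Fin r)) :
    permEmbed n r hr hrn (σ * τ) = permEmbed n r hr hrn σ * permEmbed n r hr hrn τ := by
  funext i
  show _ = permEmbed n r hr hrn σ (permEmbed n r hr hrn τ i)
  simp only [permEmbed_apply, toR_castLE]
  rfl

/-- The map `g_u ∈ T_n` determined by `u : Fin r → Fin n`. -/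
def gMap {n : ℕ} {r : ℕ} (hr : 1 ≤ r) (u : Fin r → Fin n) : Function.End (Fin n) :=
  fun i => u (toR r hr i)

lemma gMap_castLE (u : Fin r → Fin n) (i : Fin r) :
    gMap hr u (Fin.castLE hrn i) = u i := by
  rw [gMap, toR_castLE]

lemma gMap_mul_permEmbed (u : Fin r → Fin n) (σ : Equiv.Perm (Fin r)) :
    gMap hr u * permEmbed n r hr hrn σ = gMap hr (u ∘ σ) := by
  funext i
  show gMap hr u (permEmbed n r hr hrn σ i) = u (σ (toR r hr i))
  rw [permEmbed_apply, gMap_castLE]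

lemma mul_permEmbed (f : Function.End (Fin n)) (σ : Equiv.Perm (Fin r)) :
    f * permEmbed n r hr hrn σ = gMap hr ((f ∘ Fin.castLE hrn) ∘ σ) := by
  funext i
  show f (permEmbed n r hr hrn σ i) = f (Fin.castLE hrn (σ (toR r hr i)))
  rw [permEmbed_apply]

lemma single_permEmbed_mul_eta (τ : Equiv.Perm (Fin r)) :
    MonoidAlgebra.single (permEmbed n r hr hrn τ) (1 : ℂ) * eta n r hr hrn
      = ((Equiv.Perm.sign τ : ℤ) : ℂ) • eta n r hr hrn := by
  have hs : ((Equiv.Perm.sign τ : ℤ) : ℂ) * ((Equiv.Perm.sign τ : ℤ) : ℂ) = 1 := by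
    rw [← Int.cast_mul, ← Units.val_mul, Int.units_mul_self, Units.val_one, Int.cast_one]
  unfold eta
  rw [mul_smul_comm, Finset.mul_sum, smul_comm]
  congr 1
  rw [Finset.smul_sum]
  rw [← Equiv.sum_comp (Equiv.mulLeft τ) (fun σ =>
    ((Equiv.Perm.sign τ : ℤ) : ℂ) • MonoidAlgebra.single (permEmbed n r hr hrn σ)
      ((Equiv.Perm.sign σ : ℤ) : ℂ))]
  refine Finset.sum_congr rfl fun σ _ => ?_
  rw [MonoidAlgebra.single_mul_single, one_mul, Equiv.coe_mulLeft, ← permEmbed_mul,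
    MonoidAlgebra.smul_single']
  congr 1
  rw [map_mul, Units.val_mul, Int.cast_mul, ← mul_assoc, hs, one_mul]

lemma eta_idem' : eta n r hr hrn * eta n r hr hrn = eta n r hr hrn := by
  nth_rewrite 1 [eta]
  rw [smul_mul_assoc, Finset.sum_mul]
  have : ∀ σ : Equiv.Perm (Fin r),
      MonoidAlgebra.single (permEmbed n r hr hrn σ) ((Equiv.Perm.sign σ : ℤ) : ℂ)
        * eta n r hr hrn = eta n r hr hrn := by
    intro σ
    have h1 : MonoidAlgebra.single (permEmbed n r hr hrn σ) ((Equiv.Perm.sign σ : ℤ) : ℂ)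
        = ((Equiv.Perm.sign σ : ℤ) : ℂ) • MonoidAlgebra.single (permEmbed n r hr hrn σ) (1 : ℂ) := by
      rw [MonoidAlgebra.smul_single', mul_one]
    rw [h1, smul_mul_assoc, single_permEmbed_mul_eta, smul_smul, ← Int.cast_mul,
      ← Units.val_mul, Int.units_mul_self, Units.val_one, Int.cast_one, one_smul]
  rw [Finset.sum_congr rfl fun σ _ => this σ, Finset.sum_const, Finset.card_univ]
  rw [← Nat.cast_smul_eq_nsmul ℂ, smul_smul, Fintype.card_perm,
    Fintype.card_fin,
    inv_mul_cancel₀ (by exact_mod_cast Nat.factorial_ne_zero r), one_smul]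

/-- The element `single (g_u) 1 * η` of the monoid algebra. -/
def cU (u : Fin r → Fin n) : MonoidAlgebra ℂ (Function.End (Fin n)) :=
  MonoidAlgebra.single (gMap hr u) 1 * eta n r hr hrn

lemma cU_comp_perm (u : Fin r → Fin n) (σ : Equiv.Perm (Fin r)) :
    cU n r hr hrn (u ∘ σ) = ((Equiv.Perm.sign σ : ℤ) : ℂ) • cU n r hr hrn u := by
  rw [cU, cU, ← gMap_mul_permEmbed, ← one_mul (1 : ℂ), ← MonoidAlgebra.single_mul_single,
    mul_assoc, single_permEmbed_mul_eta, mul_smul_comm, one_mul]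

lemma single_mul_eta (f : Function.End (Fin n)) :
    MonoidAlgebra.single f (1 : ℂ) * eta n r hr hrn = cU n r hr hrn (f ∘ Fin.castLE hrn) := by
  rw [cU]
  unfold eta
  rw [mul_smul_comm, mul_smul_comm, Finset.mul_sum, Finset.mul_sum]
  congr 1
  refine Finset.sum_congr rfl fun σ _ => ?_
  rw [MonoidAlgebra.single_mul_single, MonoidAlgebra.single_mul_single]
  congr 1
  rw [mul_permEmbed, gMap_mul_permEmbed]

end AuxEta
noncomputable section AuxMaps

open MonoidAlgebra Finset

variable (n r : ℕ) (hr : 1 ≤ r) (hrn : r ≤ n)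

/-- The multilinear map sending `v` to `∑_u (∏ k, v k (u k)) • (single (g_u) 1 * η)`. -/
def multA : MultilinearMap ℂ (fun _ : Fin r => (Fin n → ℂ)) (MonoidAlgebra ℂ (Function.End (Fin n))) :=
  ∑ u : Fin r → Fin n,
    (((MultilinearMap.mkPiAlgebra ℂ (Fin r) ℂ).compLinearMap
      (fun k => LinearMap.proj (u k))).smulRight (cU n r hr hrn u))

lemma multA_apply (v : Fin r → (Fin n → ℂ)) :
    multA n r hr hrn v = ∑ u : Fin r → Fin n, (∏ k, v k (u k)) • cU n r hr hrn u := by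
  simp [multA, MultilinearMap.smulRight, MultilinearMap.mkPiAlgebra_apply]

lemma multA_alternating (v : Fin r → (Fin n → ℂ)) (i j : Fin r) (hv : v i = v j)
    (hij : i ≠ j) : multA n r hr hrn v = 0 := by
  have hswap : ∀ k, v (Equiv.swap i j k) = v k := by
    intro k
    rcases eq_or_ne k i with rfl | hki
    · rw [Equiv.swap_apply_left, hv]
    rcases eq_or_ne k j with rfl | hkj
    · rw [Equiv.swap_apply_right, hv]
    · rw [Equiv.swap_apply_of_ne_of_ne hki hkj]
  have key : multA n r hr hrn v = -multA n r hr hrn v := by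
    have hre := Equiv.sum_comp (Equiv.arrowCongr (Equiv.swap i j) (Equiv.refl (Fin n)))
      (fun u => (∏ k, v k (u k)) • cU n r hr hrn u)
    rw [multA_apply]
    nth_rewrite 1 [← hre]
    rw [← Finset.sum_neg_distrib]
    refine Finset.sum_congr rfl fun u _ => ?_
    have h1 : (Equiv.arrowCongr (Equiv.swap i j) (Equiv.refl (Fin n))) u
        = u ∘ (Equiv.swap i j) := by
      funext k
      simp [Equiv.arrowCongr_apply, Equiv.symm_swap]
    rw [h1, cU_comp_perm, Equiv.Perm.sign_swap hij]
    have h2 : (∏ k, v k ((u ∘ (Equiv.swap i j)) k)) = ∏ k, v k (u k) := by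
      rw [← Equiv.prod_comp (Equiv.swap i j) (fun k => v k (u k))]
      refine Finset.prod_congr rfl fun k _ => ?_
      simp [Function.comp, hswap]
    rw [h2]
    push_cast
    rw [smul_smul]
    ring_nf
    rw [neg_smul]
  have h2 : (2 : ℂ) • multA n r hr hrn v = 0 := by
    rw [two_smul]
    nth_rewrite 1 [key]
    rw [neg_add_cancel]
  simpa using (smul_eq_zero.mp h2).resolve_left (by norm_num)

/-- The alternating map version of `multA`. -/
def altA : (Fin n → ℂ) [⋀^Fin r]→ₗ[ℂ] (MonoidAlgebra ℂ (Function.End (Fin n))) :=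
  { multA n r hr hrn with
    map_eq_zero_of_eq' := fun v i j hv hij => multA_alternating n r hr hrn v i j hv hij }

lemma altA_apply (v : Fin r → (Fin n → ℂ)) :
    altA n r hr hrn v = ∑ u : Fin r → Fin n, (∏ k, v k (u k)) • cU n r hr hrn u :=
  multA_apply n r hr hrn v

lemma altA_basis (u : Fin r → Fin n) :
    altA n r hr hrn (fun k => Pi.single (u k) (1 : ℂ)) = cU n r hr hrn u := by
  rw [altA_apply]
  rw [Finset.sum_eq_single u]
  · simp [Pi.single_eq_same]
  · intro u' _ hu'
    obtain ⟨k, hk⟩ := Function.ne_iff.mp hu'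
    rw [Finset.prod_eq_zero (Finset.mem_univ k) (Pi.single_eq_of_ne hk 1), zero_smul]
  · intro h; exact absurd (Finset.mem_univ u) h

/-- The family of alternating maps used to lift `altA` to the exterior algebra. -/
def altFam : ∀ i : ℕ, (Fin n → ℂ) [⋀^Fin i]→ₗ[ℂ] (MonoidAlgebra ℂ (Function.End (Fin n))) :=
  fun i => if h : i = r then h ▸ altA n r hr hrn else 0

lemma altFam_r : altFam n r hr hrn r = altA n r hr hrn := by
  simp [altFam]

/-- The linear map `Ψ : Λ^r(ℂ^n) → ℂ[T_n]` induced by `altA`. -/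
def PsiMap : (⋀[ℂ]^r (Fin n → ℂ)) →ₗ[ℂ] (MonoidAlgebra ℂ (Function.End (Fin n))) :=
  (ExteriorAlgebra.liftAlternating (altFam n r hr hrn)).comp (Submodule.subtype _)

lemma PsiMap_wedge (v : Fin r → (Fin n → ℂ)) :
    PsiMap n r hr hrn (wedge r v) = altA n r hr hrn v := by
  rw [PsiMap, LinearMap.comp_apply]
  show ExteriorAlgebra.liftAlternating (altFam n r hr hrn) (ExteriorAlgebra.ιMulti ℂ r v) = _
  rw [ExteriorAlgebra.liftAlternating_apply_ιMulti, altFam_r]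

lemma natRep_single (f : Function.End (Fin n)) (i : Fin n) :
    natRep n f (Pi.single i (1 : ℂ)) = Pi.single (f i) 1 := by
  funext j
  show (∑ i', if f i' = j then Pi.single i (1 : ℂ) i' else 0) = _
  rw [Finset.sum_congr rfl fun i' _ => ?_ , Finset.sum_ite_eq' Finset.univ i
    (fun i' => if f i' = j then (1 : ℂ) else 0)]
  · simp [Pi.single_apply, eq_comm]
  · rw [Pi.single_apply]
    split <;> split <;> simp_all
noncomputable section AuxPhi

set_option maxHeartbeats 1000000
set_option synthInstance.maxHeartbeats 400000

open MonoidAlgebra Finset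

variable (n r : ℕ) (hr : 1 ≤ r) (hrn : r ≤ n)

lemma extRep_wedge (f : Function.End (Fin n)) (v : Fin r → (Fin n → ℂ)) :
    extRep n r f (wedge r v) = wedge r (fun k => natRep n f (v k)) := by
  have h : extRep n r f (wedge r v) = extMap r (natRep n f) (wedge r v) := rfl
  rw [h]
  refine Subtype.ext ?_
  rw [extMap]
  show ExteriorAlgebra.map (natRep n f) (ExteriorAlgebra.ιMulti ℂ r v)
      = ExteriorAlgebra.ιMulti ℂ r fun k => natRep n f (v k)
  rw [ExteriorAlgebra.map_apply_ιMulti]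
  rfl

lemma wedge_perm (v : Fin r → (Fin n → ℂ)) (σ : Equiv.Perm (Fin r)) :
    wedge r (fun k => v (σ k)) = ((Equiv.Perm.sign σ : ℤ) : ℂ) • wedge r v := by
  refine Subtype.ext ?_
  show ExteriorAlgebra.ιMulti ℂ r (v ∘ σ) = _
  rw [AlternatingMap.map_perm, Submodule.coe_smul]
  show _ = ((Equiv.Perm.sign σ : ℤ) : ℂ) • ExteriorAlgebra.ιMulti ℂ r v
  rw [Units.smul_def, Int.cast_smul_eq_zsmul]

/-- The distinguished wedge `v_1 ∧ ⋯ ∧ v_r`. -/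
def wZero : ⋀[ℂ]^r (Fin n → ℂ) :=
  wedge r (fun k => Pi.single (Fin.castLE hrn k) (1 : ℂ))

/-- The evaluation map `a ↦ a ⬝ (v_1 ∧ ⋯ ∧ v_r)`, as a `ℂ`-linear map. -/
def PhiMap : MonoidAlgebra ℂ (Function.End (Fin n)) →ₗ[ℂ] (⋀[ℂ]^r (Fin n → ℂ)) where
  toFun a := Representation.asAlgebraHom (extRep n r) a (wZero n r hrn)
  map_add' a b := by
    show Representation.asAlgebraHom (extRep n r) (a + b) (wZero n r hrn) = _
    rw [map_add, LinearMap.add_apply]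
  map_smul' c a := by
    show Representation.asAlgebraHom (extRep n r) (c • a) (wZero n r hrn) = _
    rw [map_smul, LinearMap.smul_apply]
    rfl

lemma PhiMap_single (f : Function.End (Fin n)) :
    PhiMap n r hrn (MonoidAlgebra.single f 1) = wedge r (fun k => Pi.single (f (Fin.castLE hrn k)) 1) := by
  show Representation.asAlgebraHom (extRep n r) (MonoidAlgebra.single f 1) (wZero n r hrn) = _
  rw [Representation.asAlgebraHom_single_one, wZero, extRep_wedge]
  congr 1
  funext k
  rw [natRep_single]

lemma PhiMap_eta : PhiMap n r hrn (eta n r hr hrn) = wZero n r hrn := by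
  show Representation.asAlgebraHom (extRep n r) (eta n r hr hrn) (wZero n r hrn) = wZero n r hrn
  rw [eta, map_smul, map_sum, LinearMap.smul_apply, LinearMap.sum_apply]
  have : ∀ σ : Equiv.Perm (Fin r),
      (Representation.asAlgebraHom (extRep n r)
        (MonoidAlgebra.single (permEmbed n r hr hrn σ) ((Equiv.Perm.sign σ : ℤ) : ℂ)))
        (wZero n r hrn) = wZero n r hrn := by
    intro σ
    rw [Representation.asAlgebraHom_single, LinearMap.smul_apply, wZero, extRep_wedge]
    have h1 : (fun k => natRep n (permEmbed n r hr hrn σ) (Pi.single (Fin.castLE hrn k) (1:ℂ)))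
        = fun k => Pi.single (Fin.castLE hrn (σ k)) (1:ℂ) := by
      funext k
      rw [natRep_single, permEmbed_castLE]
    rw [h1]
    have h2 := wedge_perm n r (fun k => Pi.single (Fin.castLE hrn k) (1:ℂ)) σ
    rw [h2, smul_smul, ← Int.cast_mul, ← Units.val_mul, Int.units_mul_self, Units.val_one,
      Int.cast_one, one_smul]
  rw [Finset.sum_congr rfl fun σ _ => this σ, Finset.sum_const, Finset.card_univ,
    ← Nat.cast_smul_eq_nsmul ℂ, smul_smul, Fintype.card_perm, Fintype.card_fin,
    inv_mul_cancel₀ (by exact_mod_cast Nat.factorial_ne_zero r), one_smul]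

lemma PhiMap_mul (a b : MonoidAlgebra ℂ (Function.End (Fin n))) :
    PhiMap n r hrn (a * b) = Representation.asAlgebraHom (extRep n r) a (PhiMap n r hrn b) := by
  show Representation.asAlgebraHom (extRep n r) (a * b) (wZero n r hrn) = _
  rw [map_mul]
  rfl

lemma PhiMap_cU (u : Fin r → Fin n) :
    PhiMap n r hrn (cU n r hr hrn u) = wedge r (fun k => Pi.single (u k) (1 : ℂ)) := by
  rw [cU, PhiMap_mul, PhiMap_eta n r hr hrn, Representation.asAlgebraHom_single_one,
    wZero, extRep_wedge]
  congr 1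
  funext k
  rw [natRep_single, gMap_castLE]

lemma PsiPhi_single (f : Function.End (Fin n)) :
    PsiMap n r hr hrn (PhiMap n r hrn (MonoidAlgebra.single f 1 * eta n r hr hrn))
      = MonoidAlgebra.single f (1 : ℂ) * eta n r hr hrn := by
  rw [single_mul_eta, PhiMap_cU n r hr hrn, PsiMap_wedge, altA_basis]

lemma PsiPhi (a : MonoidAlgebra ℂ (Function.End (Fin n))) :
    PsiMap n r hr hrn (PhiMap n r hrn (a * eta n r hr hrn)) = a * eta n r hr hrn := by
  induction a using MonoidAlgebra.induction_on with
  | of f => simpa only [MonoidAlgebra.of_apply] using PsiPhi_single n r hr hrn f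
  | add a b ha hb => rw [add_mul, map_add, map_add, ha, hb]
  | smul c a ha => rw [smul_mul_assoc, map_smul, map_smul, ha]

end AuxPhi
noncomputable section AuxSpan

set_option maxHeartbeats 1000000
set_option synthInstance.maxHeartbeats 400000

open MonoidAlgebra Finset

variable (n r : ℕ) (hr : 1 ≤ r) (hrn : r ≤ n)

/-- The wedge map as a bundled multilinear map into the `r`-th exterior power. -/
def wedgeMulti : MultilinearMap ℂ (fun _ : Fin r => (Fin n → ℂ)) (⋀[ℂ]^r (Fin n → ℂ)) :=
  ((ExteriorAlgebra.ιMulti ℂ r).toMultilinearMap).codRestrict (⋀[ℂ]^r (Fin n → ℂ))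
    (fun v => ExteriorAlgebra.ιMulti_range ℂ r ⟨v, rfl⟩)

lemma wedgeMulti_eq (v : Fin r → (Fin n → ℂ)) : wedgeMulti n r v = wedge r v :=
  Subtype.ext rfl

lemma wedge_expand (v : Fin r → (Fin n → ℂ)) :
    wedge r v = ∑ u : Fin r → Fin n,
      (∏ k, v k (u k)) • wedge r (fun k => Pi.single (u k) (1 : ℂ)) := by
  have hv : v = fun k => ∑ i : Fin n, (v k i) • (Pi.single i 1 : Fin n → ℂ) := by
    funext k j
    rw [Finset.sum_apply]
    simp [Pi.single_apply]
  rw [← wedgeMulti_eq]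
  conv_lhs => rw [hv]
  rw [MultilinearMap.map_sum]
  refine Finset.sum_congr rfl fun u _ => ?_
  rw [MultilinearMap.map_smul_univ, wedgeMulti_eq]

lemma exterior_spanned (x : ⋀[ℂ]^r (Fin n → ℂ)) :
    x ∈ Submodule.span ℂ (Set.range (fun v : Fin r → (Fin n → ℂ) => wedge r v)) := by
  obtain ⟨z, hz⟩ := x
  have hz' : z ∈ Submodule.span ℂ (Set.range (ExteriorAlgebra.ιMulti ℂ r (M := Fin n → ℂ))) := by
    rw [ExteriorAlgebra.ιMulti_span_fixedDegree]
    exact hz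
  revert hz
  refine Submodule.span_induction
    (p := fun z _ => ∀ h : z ∈ ⋀[ℂ]^r (Fin n → ℂ),
      (⟨z, h⟩ : ⋀[ℂ]^r (Fin n → ℂ)) ∈ Submodule.span ℂ
        (Set.range (fun v : Fin r → (Fin n → ℂ) => wedge r v)))
    ?_ ?_ ?_ ?_ hz'
  · intro z hzr h
    obtain ⟨v, rfl⟩ := hzr
    exact Submodule.subset_span ⟨v, Subtype.ext rfl⟩
  · intro h
    exact Submodule.zero_mem _
  · intro a b ha' hb' iha ihb h
    exact Submodule.add_mem _
      (iha (by rwa [ExteriorAlgebra.ιMulti_span_fixedDegree] at ha'))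
      (ihb (by rwa [ExteriorAlgebra.ιMulti_span_fixedDegree] at hb'))
  · intro c a ha' iha h
    exact Submodule.smul_mem _ c
      (iha (by rwa [ExteriorAlgebra.ιMulti_span_fixedDegree] at ha'))

lemma mul_eta_mem (a : MonoidAlgebra ℂ (Function.End (Fin n))) :
    a * eta n r hr hrn ∈ Submodule.span (MonoidAlgebra ℂ (Function.End (Fin n))) {eta n r hr hrn} :=
  Submodule.mem_span_singleton.mpr ⟨a, by rw [smul_eq_mul]⟩

lemma span_eta_mul {x : MonoidAlgebra ℂ (Function.End (Fin n))}
    (hx : x ∈ Submodule.span (MonoidAlgebra ℂ (Function.End (Fin n))) {eta n r hr hrn}) :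
    x * eta n r hr hrn = x := by
  obtain ⟨a, rfl⟩ := Submodule.mem_span_singleton.mp hx
  rw [smul_eq_mul, mul_assoc, eta_idem']

lemma mem_hit (x : ⋀[ℂ]^r (Fin n → ℂ)) :
    x ∈ Submodule.map (PhiMap n r hrn)
      ((Submodule.span (MonoidAlgebra ℂ (Function.End (Fin n)))
        {eta n r hr hrn}).restrictScalars ℂ) := by
  have hw : ∀ v : Fin r → (Fin n → ℂ), wedge r v ∈ Submodule.map (PhiMap n r hrn)
      ((Submodule.span (MonoidAlgebra ℂ (Function.End (Fin n)))
        {eta n r hr hrn}).restrictScalars ℂ) := by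
    intro v
    rw [wedge_expand]
    refine Submodule.sum_mem _ fun u _ => Submodule.smul_mem _ _ ?_
    refine ⟨cU n r hr hrn u, ?_, PhiMap_cU n r hr hrn u⟩
    show cU n r hr hrn u ∈ Submodule.span (MonoidAlgebra ℂ (Function.End (Fin n))) {eta n r hr hrn}
    rw [cU]
    exact mul_eta_mem n r hr hrn _
  have hx := exterior_spanned n r x
  refine Submodule.span_le.mpr ?_ hx
  rintro _ ⟨v, rfl⟩
  exact hw v

end AuxSpan
set_option maxHeartbeats 2000000 in
set_option synthInstance.maxHeartbeats 400000 in
/-- The exterior power `Λ^r(ℂ^n)` with the induced diagonal `T_n`-action (the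
representation `extRep n r`, giving a `ℂ[T_n]`-module structure) satisfies:
`η = (1/r!) ∑_{g ∈ G} sgn(g|_{[r]}) g` (where `G ≅ S_r` is the maximal subgroup at
`e_r`) is an idempotent of the monoid algebra `ℂ[T_n]`, the left ideal `ℂ[T_n]·η`
is isomorphic to `Λ^r(ℂ^n)` as a left `ℂ[T_n]`-module, and in particular
`Λ^r(ℂ^n)` is a projective `ℂ[T_n]`-module. -/
theorem exteriorPower_projective (n r : ℕ) (hr : 1 ≤ r) (hrn : r ≤ n) :
    IsIdempotentElem (eta n r hr hrn) ∧
    Nonempty ((Submodule.span (MonoidAlgebra ℂ (Function.End (Fin n))) {eta n r hr hrn})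
      ≃ₗ[MonoidAlgebra ℂ (Function.End (Fin n))] (extRep n r).asModule) ∧
    Module.Projective (MonoidAlgebra ℂ (Function.End (Fin n))) ((extRep n r).asModule) := by
  have idem : IsIdempotentElem (eta n r hr hrn) := eta_idem' n r hr hrn
  let w0' : (extRep n r).asModule :=
    (Representation.asModuleEquiv (extRep n r)).symm (wZero n r hrn)
  have hsmul : ∀ a : MonoidAlgebra ℂ (Function.End (Fin n)),
      (Representation.asModuleEquiv (extRep n r)) (a • w0') = PhiMap n r hrn a := by
    intro a
    rw [Representation.asModuleEquiv_map_smul, LinearEquiv.apply_symm_apply]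
    rfl
  let φ : (Submodule.span (MonoidAlgebra ℂ (Function.End (Fin n))) {eta n r hr hrn})
      →ₗ[MonoidAlgebra ℂ (Function.End (Fin n))] (extRep n r).asModule :=
    { toFun := fun x => (x : MonoidAlgebra ℂ (Function.End (Fin n))) • w0'
      map_add' := fun x y => by
        show ((x + y : Submodule.span (MonoidAlgebra ℂ (Function.End (Fin n))) {eta n r hr hrn})
          : MonoidAlgebra ℂ (Function.End (Fin n))) • w0'
            = (x : MonoidAlgebra ℂ (Function.End (Fin n))) • w0'
              + (y : MonoidAlgebra ℂ (Function.End (Fin n))) • w0'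
        rw [Submodule.coe_add, add_smul]
      map_smul' := fun c x => by
        show ((c • x : Submodule.span (MonoidAlgebra ℂ (Function.End (Fin n))) {eta n r hr hrn})
          : MonoidAlgebra ℂ (Function.End (Fin n))) • w0'
            = c • ((x : MonoidAlgebra ℂ (Function.End (Fin n))) • w0')
        rw [Submodule.coe_smul, smul_eq_mul, mul_smul] }
  have hφ : ∀ x : (Submodule.span (MonoidAlgebra ℂ (Function.End (Fin n))) {eta n r hr hrn}),
      φ x = (x : MonoidAlgebra ℂ (Function.End (Fin n))) • w0' := fun _ => rfl
  have hinj : Function.Injective φ := by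
    intro x y hxy
    have h1 : PhiMap n r hrn (x : MonoidAlgebra ℂ (Function.End (Fin n)))
        = PhiMap n r hrn (y : MonoidAlgebra ℂ (Function.End (Fin n))) := by
      rw [← hsmul, ← hsmul]
      rw [hφ x, hφ y] at hxy
      exact congrArg _ hxy
    have hx := span_eta_mul n r hr hrn x.2
    have hy := span_eta_mul n r hr hrn y.2
    have ex : PsiMap n r hr hrn (PhiMap n r hrn (x : MonoidAlgebra ℂ (Function.End (Fin n))))
        = (x : MonoidAlgebra ℂ (Function.End (Fin n))) := by
      conv_lhs => rw [← hx]
      rw [PsiPhi, hx]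
    have ey : PsiMap n r hr hrn (PhiMap n r hrn (y : MonoidAlgebra ℂ (Function.End (Fin n))))
        = (y : MonoidAlgebra ℂ (Function.End (Fin n))) := by
      conv_lhs => rw [← hy]
      rw [PsiPhi, hy]
    exact Subtype.ext (by rw [← ex, h1, ey])
  have hsurj : Function.Surjective φ := by
    intro m
    obtain ⟨x, hx, hPhix⟩ := mem_hit n r hr hrn ((Representation.asModuleEquiv (extRep n r)) m)
    refine ⟨⟨x, hx⟩, ?_⟩
    apply (Representation.asModuleEquiv (extRep n r)).injective
    rw [hφ ⟨x, hx⟩, hsmul]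
    exact hPhix
  have hprojspan : Module.Projective (MonoidAlgebra ℂ (Function.End (Fin n)))
      (Submodule.span (MonoidAlgebra ℂ (Function.End (Fin n))) {eta n r hr hrn}) := by
    refine Module.Projective.of_split (Submodule.subtype _)
      ({ toFun := fun a => ⟨a * eta n r hr hrn, mul_eta_mem n r hr hrn a⟩
         map_add' := fun a b => by
           refine Subtype.ext ?_
           simp [add_mul]
         map_smul' := fun c a => by
           refine Subtype.ext ?_
           simp [smul_eq_mul, mul_assoc] }) ?_
    refine LinearMap.ext fun x => ?_
    refine Subtype.ext ?_
    exact span_eta_mul n r hr hrn x.2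
  refine ⟨idem, ⟨LinearEquiv.ofBijective φ ⟨hinj, hsurj⟩⟩, ?_⟩
  exact Module.Projective.of_equiv (LinearEquiv.ofBijective φ ⟨hinj, hsurj⟩)
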